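/- Corollary (Jacobi-Stirling triangle of the first kind). Let z be a real number with z > −1. Then the Jacobi-Stirling triangle of the first kind [Jc n k]_{n,k≥0} is totally positive, and for every n ∈ ℕ the Toeplitz matrix 𝒯(c) of the n-th row sequence c k = Jc n k is totally positive. -/

import Mathlib

open Finset

/-- An `ℕ × ℕ` matrix of real numbers is *totally positive* if every minor
taken along strictly increasing row and column indices is nonnegative. -/
def TPReal (A : ℕ → ℕ → ℝ) : Prop :=
  ∀ r : ℕ, 1 ≤ r → ∀ ρ κ : Fin r → ℕ, StrictMono ρ → StrictMono κ →
    0 ≤ (Matrix.of fun i j : Fin r => A (ρ i) (κ j)).det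

/-- The Toeplitz matrix of a sequence: `𝒯(c) i j = c (i - j)` for `i ≥ j`
and `0` otherwise. -/
def toeplitz (c : ℕ → ℝ) : ℕ → ℕ → ℝ :=
  fun i j => if j ≤ i then c (i - j) else 0

/-- The Jacobi-Stirling numbers of the first kind with parameter `z`:
`Jc 0 0 = 1`, `Jc n 0 = Jc 0 n = 0` for `n ≥ 1`, and
`Jc n k = Jc (n-1) (k-1) + (n-1)·(n-1+z)·Jc (n-1) k` for `n, k ≥ 1`. -/
noncomputable def jacobiStirling1 (z : ℝ) : ℕ → ℕ → ℝ
  | 0, 0 => 1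
  | 0, _ + 1 => 0
  | _ + 1, 0 => 0
  | n + 1, k + 1 =>
      jacobiStirling1 z n k + (n : ℝ) * ((n : ℝ) + z) * jacobiStirling1 z n (k + 1)




/-- Minors with row indices `< K` are nonnegative. -/
def TPupto (K : ℕ) (A : ℕ → ℕ → ℝ) : Prop :=
  ∀ r : ℕ, ∀ ρ κ : Fin r → ℕ, StrictMono ρ → StrictMono κ → (∀ i, ρ i < K) →
    0 ≤ (Matrix.of fun i j : Fin r => A (ρ i) (κ j)).det

lemma TPupto_congr {K : ℕ} {A B : ℕ → ℕ → ℝ} (h : ∀ i j, A i j = B i j)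
    (hA : TPupto K A) : TPupto K B := by
  have : A = B := funext fun i => funext fun j => h i j
  rwa [← this]

lemma strictMono_fin_id {r : ℕ} {φ : Fin r → Fin r} (h : StrictMono φ) : φ = id := by
  have hbij : Function.Bijective φ := Finite.injective_iff_bijective.mp h.injective
  exact (h.range_inj strictMono_id).mp (by rw [hbij.2.range_eq]; simp)

lemma det_delta_nonneg {r : ℕ} (ρ κ : Fin r → ℕ) (hρ : StrictMono ρ) (hκ : StrictMono κ) :
    0 ≤ (Matrix.of fun i j : Fin r => if ρ i = κ j then (1:ℝ) else 0).det := by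
  by_cases h : ∀ i, ∃ j, ρ i = κ j
  · choose φ hφ using h
    have hφm : StrictMono φ := fun a b hab => hκ.lt_iff_lt.mp (by rw [← hφ, ← hφ]; exact hρ hab)
    have hid := strictMono_fin_id hφm
    rw [hid] at hφ
    simp only [id] at hφ
    have : (Matrix.of fun i j : Fin r => if ρ i = κ j then (1:ℝ) else 0) = 1 := by
      ext i j
      have : ρ i = κ j ↔ i = j := by
        rw [hφ i]
        constructor
        · intro hh; exact hκ.injective hh
        · intro hh; rw [hh]
      simp only [Matrix.of_apply, Matrix.one_apply]
      simp [this]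
    rw [this, Matrix.det_one]
    norm_num
  · push_neg at h
    obtain ⟨i, hi⟩ := h
    rw [Matrix.det_eq_zero_of_row_eq_zero i (fun j => by simp [hi j])]

lemma TPupto_zero (A : ℕ → ℕ → ℝ) : TPupto 0 A := by
  intro r ρ κ hρ hκ hK
  match r with
  | 0 => simp [Matrix.det_isEmpty]
  | r + 1 => exact absurd (hK 0) (Nat.not_lt_zero _)

/-- Column operation: add `c` times column `q+1` to column `q`. -/
lemma TPupto_colop {K : ℕ} {A : ℕ → ℕ → ℝ} (hA : TPupto K A) {c : ℝ} (hc : 0 ≤ c) (q : ℕ) :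
    TPupto K (fun i k => A i k + if k = q then c * A i (q + 1) else 0) := by
  intro r ρ κ hρ hκ hK
  by_cases hq : ∃ j₀, κ j₀ = q
  · obtain ⟨j₀, hj₀⟩ := hq
    set B : Matrix (Fin r) (Fin r) ℝ := Matrix.of fun i j => A (ρ i) (κ j) with hB
    have hM : (Matrix.of fun i j : Fin r =>
        A (ρ i) (κ j) + if κ j = q then c * A (ρ i) (q + 1) else 0)
        = B.updateCol j₀ ((fun i => B i j₀) + c • fun i => A (ρ i) (q + 1)) := by
      ext i j
      rw [Matrix.updateCol_apply]
      by_cases hj : j = j₀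
      · subst hj
        simp [hB, hj₀]
      · have : κ j ≠ q := fun hh => hj (hκ.injective (hh.trans hj₀.symm))
        simp [hB, this, hj]
    rw [hM, Matrix.det_updateCol_add, Matrix.det_updateCol_smul,
      Matrix.updateCol_eq_self]
    have h1 : 0 ≤ B.det := hA r ρ κ hρ hκ hK
    have h2 : 0 ≤ (B.updateCol j₀ fun i => A (ρ i) (q + 1)).det := by
      by_cases hq1 : ∃ j₁, κ j₁ = q + 1
      · obtain ⟨j₁, hj₁⟩ := hq1
        have hne : j₀ ≠ j₁ := by
          intro hh; rw [hh, hj₁] at hj₀; omega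
        refine le_of_eq (Matrix.det_zero_of_column_eq hne.symm fun k => ?_).symm
        rw [Matrix.updateCol_apply, Matrix.updateCol_apply]
        simp [hne.symm, hB, hj₁]
      · push_neg at hq1
        set κ' : Fin r → ℕ := Function.update κ j₀ (q + 1) with hκ'
        have hup : B.updateCol j₀ (fun i => A (ρ i) (q + 1))
            = Matrix.of fun i j : Fin r => A (ρ i) (κ' j) := by
          ext i j
          rw [Matrix.updateCol_apply]
          by_cases hj : j = j₀
          · subst hj; simp [hκ', Function.update_self]
          · simp [hκ', Function.update_of_ne hj, hB, hj]
        have hκ'm : StrictMono κ' := by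
          intro a b hab
          have hne : a ≠ b := ne_of_lt hab
          by_cases ha : a = j₀
          · have hb' : b ≠ j₀ := fun h => hne (ha.trans h.symm)
            have h3 : κ j₀ < κ b := hκ (ha ▸ hab)
            have h4 : κ b ≠ q + 1 := hq1 b
            rw [hκ', ha, Function.update_self, Function.update_of_ne hb']
            omega
          · by_cases hb : b = j₀
            · have h3 : κ a < κ j₀ := hκ (hb ▸ hab)
              rw [hκ', hb, Function.update_of_ne ha, Function.update_self]
              omega
            · rw [hκ', Function.update_of_ne ha, Function.update_of_ne hb]
              exact hκ hab
        rw [hup]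
        exact hA r ρ κ' hρ hκ'm hK
    have := mul_nonneg hc h2
    linarith
  · push_neg at hq
    have : (Matrix.of fun i j : Fin r =>
        A (ρ i) (κ j) + if κ j = q then c * A (ρ i) (q + 1) else 0)
        = Matrix.of fun i j : Fin r => A (ρ i) (κ j) := by
      ext i j; simp [hq j]
    rw [this]
    exact hA r ρ κ hρ hκ hK

lemma TPupto_chain {K : ℕ} {B : ℕ → ℕ → ℝ} (hB : TPupto K B) {c : ℝ} (hc : 0 ≤ c)
    (q₀ : ℕ) : ∀ Q : ℕ,
    TPupto K (fun i k => B i k + if q₀ ≤ k ∧ k < Q then c * B i (k + 1) else 0) := by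
  intro Q
  induction Q with
  | zero => exact TPupto_congr (fun i j => by simp) hB
  | succ Q ih =>
    by_cases hQ : q₀ ≤ Q
    · have h2 := TPupto_colop ih hc Q
      refine TPupto_congr (fun i k => ?_) h2
      by_cases hk : k = Q
      · subst hk
        have h3 : ¬(q₀ ≤ k ∧ k < k) := by omega
        have h4 : ¬(q₀ ≤ k + 1 ∧ k + 1 < k) := by omega
        have h5 : q₀ ≤ k ∧ k < k + 1 := by omega
        simp [h3, h4, h5]
      · have h6 : (q₀ ≤ k ∧ k < Q) ↔ (q₀ ≤ k ∧ k < Q + 1) := by omega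
        simp [hk, h6]
    · refine TPupto_congr (fun i k => ?_) ih
      have : (q₀ ≤ k ∧ k < Q) ↔ (q₀ ≤ k ∧ k < Q + 1) := by omega
      congr 1
      exact if_congr this rfl rfl

lemma TPupto_upto {K : ℕ} {B : ℕ → ℕ → ℝ} (hB : TPupto K B) {c : ℝ} (hc : 0 ≤ c)
    (q₀ : ℕ) : TPupto K (fun i k => B i k + if q₀ ≤ k then c * B i (k + 1) else 0) := by
  intro r ρ κ hρ hκ hK
  match r with
  | 0 => simp [Matrix.det_isEmpty]
  | r + 1 =>
    set Q := κ (Fin.last r) + 1 with hQ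
    have h2 := TPupto_chain hB hc q₀ Q (r + 1) ρ κ hρ hκ hK
    have h3 : (Matrix.of fun i j : Fin (r+1) =>
        B (ρ i) (κ j) + if q₀ ≤ κ j then c * B (ρ i) (κ j + 1) else 0)
        = Matrix.of fun i j : Fin (r+1) =>
        B (ρ i) (κ j) + if q₀ ≤ κ j ∧ κ j < Q then c * B (ρ i) (κ j + 1) else 0 := by
      ext i j
      have : κ j < Q := by
        have := hκ.monotone (Fin.le_last j); omega
      simp only [Matrix.of_apply]
      congr 1
      have : (q₀ ≤ κ j) ↔ (q₀ ≤ κ j ∧ κ j < Q) := by omega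
      exact if_congr this rfl rfl
    rw [h3]
    exact h2

lemma TPupto_scale {K : ℕ} {B : ℕ → ℕ → ℝ} (hB : TPupto K B) {d : ℝ} (hd : 0 ≤ d) :
    TPupto K (fun i k => d * B i k) := by
  intro r ρ κ hρ hκ hK
  have : (Matrix.of fun i j : Fin r => d * B (ρ i) (κ j))
      = d • Matrix.of fun i j : Fin r => B (ρ i) (κ j) := by
    ext i j; simp
  rw [this, Matrix.det_smul]
  exact mul_nonneg (pow_nonneg hd _) (hB r ρ κ hρ hκ hK)

lemma TPupto_shift {K : ℕ} {B : ℕ → ℕ → ℝ} (hB : TPupto K B) :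
    TPupto K (fun i k => B i (k + 1)) := by
  intro r ρ κ hρ hκ hK
  exact hB r ρ (fun j => κ j + 1) hρ (fun a b hab => by simpa using hκ hab) hK

/-- Direct sum with the 1×1 identity in the corner. -/
def osum (M : ℕ → ℕ → ℝ) : ℕ → ℕ → ℝ := fun i j =>
  if i = 0 ∨ j = 0 then (if i = j then 1 else 0) else M (i - 1) (j - 1)

lemma TPupto_osum {K : ℕ} {M : ℕ → ℕ → ℝ} (hM : TPupto K M) :
    TPupto (K + 1) (osum M) := by
  intro r ρ κ hρ hκ hK
  match r with
  | 0 => simp [Matrix.det_isEmpty]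
  | r + 1 =>
    by_cases h0ρ : ρ 0 = 0
    · by_cases h0κ : κ 0 = 0
      · -- expand along the first row
        rw [Matrix.det_succ_row_zero]
        have hterm : ∀ j : Fin (r + 1), j ≠ 0 →
            (-1 : ℝ) ^ (j : ℕ) * (Matrix.of fun i j : Fin (r+1) => osum M (ρ i) (κ j)) 0 j *
              ((Matrix.of fun i j : Fin (r+1) => osum M (ρ i) (κ j)).submatrix
                Fin.succ j.succAbove).det = 0 := by
          intro j hj
          have h1 : 0 < κ j := by
            have := hκ (Fin.pos_of_ne_zero hj)
            omega
          have h2 : osum M (ρ 0) (κ j) = 0 := by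
            rw [h0ρ]
            simp [osum]
            omega
          simp [h2]
        rw [Finset.sum_eq_single 0 (fun j _ hj => hterm j hj) (by simp)]
        simp only [Fin.val_zero, pow_zero, one_mul, Matrix.of_apply, h0ρ, h0κ]
        rw [show osum M 0 0 = 1 by simp [osum]]
        rw [Fin.succAbove_zero, one_mul]
        have hsub : ((Matrix.of fun i j : Fin (r+1) => osum M (ρ i) (κ j)).submatrix
            Fin.succ Fin.succ)
            = Matrix.of fun i j : Fin r => M (ρ i.succ - 1) (κ j.succ - 1) := by
          ext i j
          have hi : 0 < ρ i.succ := by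
            have := hρ (Fin.succ_pos i); omega
          have hj : 0 < κ j.succ := by
            have := hκ (Fin.succ_pos j); omega
          simp [osum]
          omega
        rw [hsub]
        refine hM r (fun i => ρ i.succ - 1) (fun j => κ j.succ - 1) ?_ ?_ ?_
        · intro a b hab
          have h1 := hρ (Fin.succ_lt_succ_iff.mpr hab)
          have h2 : 0 < ρ a.succ := by have := hρ (Fin.succ_pos a); omega
          show ρ a.succ - 1 < ρ b.succ - 1
          omega
        · intro a b hab
          have h1 := hκ (Fin.succ_lt_succ_iff.mpr hab)
          have h2 : 0 < κ a.succ := by have := hκ (Fin.succ_pos a); omega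
          show κ a.succ - 1 < κ b.succ - 1
          omega
        · intro i
          show ρ i.succ - 1 < K
          have h1 := hρ (Fin.succ_pos i)
          have := hK i.succ; omega
      · -- first row of the minor is zero
        refine le_of_eq (Matrix.det_eq_zero_of_row_eq_zero 0 fun j => ?_).symm
        have h1 : 0 < κ j := by
          rcases Nat.eq_zero_or_pos (κ j) with h | h
          · exfalso
            rcases eq_or_ne j 0 with rfl | hj
            · exact h0κ h
            · have := hκ (Fin.pos_of_ne_zero hj); omega
          · exact h
        simp only [Matrix.of_apply, h0ρ, osum]
        simp
        omega
    · by_cases h0κ : κ 0 = 0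
      · refine le_of_eq (Matrix.det_eq_zero_of_column_eq_zero 0 fun i => ?_).symm
        have h1 : 0 < ρ i := by
          rcases Nat.eq_zero_or_pos (ρ i) with h | h
          · exfalso
            rcases eq_or_ne i 0 with rfl | hi
            · exact h0ρ h
            · have := hρ (Fin.pos_of_ne_zero hi); omega
          · exact h
        simp only [Matrix.of_apply, h0κ, osum]
        simp
        omega
      · have hmat : (Matrix.of fun i j : Fin (r+1) => osum M (ρ i) (κ j))
            = Matrix.of fun i j : Fin (r+1) => M (ρ i - 1) (κ j - 1) := by
          ext i j
          have hi : 0 < ρ i := by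
            rcases eq_or_ne i 0 with rfl | h
            · exact Nat.pos_of_ne_zero h0ρ
            · have h1 : ρ 0 < ρ i := hρ (Fin.pos_of_ne_zero h); omega
          have hj : 0 < κ j := by
            rcases eq_or_ne j 0 with rfl | h
            · exact Nat.pos_of_ne_zero h0κ
            · have h1 : κ 0 < κ j := hκ (Fin.pos_of_ne_zero h); omega
          simp [osum]
          omega
        rw [hmat]
        refine hM (r+1) (fun i => ρ i - 1) (fun j => κ j - 1) ?_ ?_ ?_
        · intro a b hab
          have h1 := hρ hab
          have h2 : 0 < ρ a := by
            rcases eq_or_ne a 0 with rfl | h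
            · exact Nat.pos_of_ne_zero h0ρ
            · have := hρ (Fin.pos_of_ne_zero h); omega
          show ρ a - 1 < ρ b - 1
          omega
        · intro a b hab
          have h1 := hκ hab
          have h2 : 0 < κ a := by
            rcases eq_or_ne a 0 with rfl | h
            · exact Nat.pos_of_ne_zero h0κ
            · have := hκ (Fin.pos_of_ne_zero h); omega
          show κ a - 1 < κ b - 1
          omega
        · intro i
          show ρ i - 1 < K
          have h2 : 0 < ρ i := by
            rcases eq_or_ne i 0 with rfl | h
            · exact Nat.pos_of_ne_zero h0ρ
            · have := hρ (Fin.pos_of_ne_zero h); omega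
          have := hK i; omega

/-- Generalized first-kind triangle with coefficient sequence `c`. -/
noncomputable def gtri (c : ℕ → ℝ) : ℕ → ℕ → ℝ
  | 0, 0 => 1
  | 0, _ + 1 => 0
  | _ + 1, 0 => 0
  | n + 1, k + 1 => gtri c n k + c n * gtri c n (k + 1)

lemma jac_eq_gtri (z : ℝ) : ∀ n k, jacobiStirling1 z n k = gtri (fun m => (m : ℝ) * ((m : ℝ) + z)) n k
  | 0, 0 => rfl
  | 0, _ + 1 => rfl
  | _ + 1, 0 => rfl
  | n + 1, k + 1 => by
    rw [jacobiStirling1, gtri, jac_eq_gtri z n k, jac_eq_gtri z n (k + 1)]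

/-- The key bidiagonal-factorization identity. -/
lemma gtri_fact (c : ℕ → ℝ) : ∀ n k, gtri c n k =
    osum (gtri fun j => c (j + 1)) n k
      + if 1 ≤ k then c 1 * osum (gtri fun j => c (j + 1)) n (k + 1) else 0
  | 0, 0 => by simp [osum, gtri]
  | 0, k + 1 => by simp [osum, gtri]
  | n + 1, 0 => by simp [osum, gtri]
  | n + 1, k + 1 => by
    have h1 := gtri_fact c n k
    have h2 := gtri_fact c n (k + 1)
    show gtri c n k + c n * gtri c n (k + 1) = _
    rw [h1, h2]
    rcases n with _ | p
    · rcases k with _ | u <;> simp [osum, gtri]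
    · rcases k with _ | u
      · rcases p with _ | q
        · simp [osum, gtri]
          try ring
        · simp [osum, gtri]
          try ring
      · simp only [osum]
        norm_num
        conv_rhs => rw [gtri, gtri]
        ring

lemma gtri_TP : ∀ K (c : ℕ → ℝ), (∀ j, 0 ≤ c j) → TPupto K (gtri c) := by
  intro K
  induction K with
  | zero => exact fun c _ => TPupto_zero _
  | succ K ih =>
    intro c hc
    have h1 : TPupto (K + 1) (osum (gtri fun j => c (j + 1))) :=
      TPupto_osum (ih _ fun j => hc (j + 1))
    have h2 := TPupto_upto h1 (hc 1) 1
    exact TPupto_congr (fun i k => (gtri_fact c i k).symm) h2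

lemma toe_step (z : ℝ) (n : ℕ) (i k : ℕ) :
    toeplitz (fun m => jacobiStirling1 z (n + 1) m) i k
      = ((n : ℝ) * ((n : ℝ) + z)) * toeplitz (fun m => jacobiStirling1 z n m) i k
        + toeplitz (fun m => jacobiStirling1 z n m) i (k + 1) := by
  simp only [toeplitz]
  rcases lt_trichotomy k i with h | h | h
  · rw [if_pos h.le, if_pos h.le, if_pos (by omega : k + 1 ≤ i)]
    rw [show i - k = (i - (k + 1)) + 1 by omega, jacobiStirling1]
    rw [show i - (k + 1) + 1 = i - k by omega]
    ring
  · subst h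
    rw [if_pos le_rfl, if_pos le_rfl, if_neg (by omega), Nat.sub_self]
    have h0 : jacobiStirling1 z (n + 1) 0 = 0 := rfl
    rw [h0]
    rcases n with _ | n
    · have h1 : jacobiStirling1 z 0 0 = 1 := rfl
      rw [h1]
      push_cast
      ring
    · have h1 : jacobiStirling1 z (n + 1) 0 = 0 := rfl
      rw [h1]
      ring
  · rw [if_neg (by omega), if_neg (by omega), if_neg (by omega)]
    ring

lemma toe_TP (z : ℝ) (hz : -1 < z) :
    ∀ n K, TPupto K (toeplitz fun k => jacobiStirling1 z n k) := by
  intro n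
  induction n with
  | zero =>
    intro K r ρ κ hρ hκ hK
    have hmat : (Matrix.of fun i j : Fin r =>
        toeplitz (fun k => jacobiStirling1 z 0 k) (ρ i) (κ j))
        = Matrix.of fun i j : Fin r => if ρ i = κ j then (1:ℝ) else 0 := by
      ext i j
      simp only [Matrix.of_apply, toeplitz]
      rcases Nat.lt_trichotomy (κ j) (ρ i) with h | h | h
      · rw [if_pos h.le, if_neg (by omega),
          show ρ i - κ j = (ρ i - κ j - 1) + 1 by omega,
          show jacobiStirling1 z 0 (ρ i - κ j - 1 + 1) = 0 from rfl]
      · rw [if_pos h.le, h, Nat.sub_self, if_pos rfl]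
        rfl
      · rw [if_neg (by omega), if_neg (by omega)]
    rw [hmat]
    exact det_delta_nonneg ρ κ hρ hκ
  | succ n ih =>
    intro K
    rcases Nat.eq_zero_or_pos n with rfl | hn
    · have h1 := TPupto_shift (ih K)
      refine TPupto_congr (fun i k => ?_) h1
      rw [toe_step z 0 i k]
      push_cast
      ring
    · set c : ℝ := (n : ℝ) * ((n : ℝ) + z) with hc
      have h1 : (1 : ℝ) ≤ (n : ℝ) := Nat.one_le_cast.mpr hn
      have hcpos : 0 < c := mul_pos (by linarith) (by linarith)
      have h2 := TPupto_upto (ih K) (by positivity : (0:ℝ) ≤ 1 / c) 0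
      have h3 := TPupto_scale h2 hcpos.le
      refine TPupto_congr (fun i k => ?_) h3
      rw [toe_step z n i k]
      rw [if_pos (Nat.zero_le k)]
      field_simp
      ring


/-- **Corollary (Jacobi-Stirling triangle of the first kind).**  For a real
number `z > -1`, the Jacobi-Stirling triangle of the first kind is totally
positive, and every row has a totally positive Toeplitz matrix. -/
theorem jacobiStirling1_totallyPositive (z : ℝ) (hz : -1 < z) :
    TPReal (jacobiStirling1 z) ∧
      ∀ n, TPReal (toeplitz fun k => jacobiStirling1 z n k) := by
  have hcn : ∀ j : ℕ, 0 ≤ (j : ℝ) * ((j : ℝ) + z) := by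
    intro j
    rcases Nat.eq_zero_or_pos j with rfl | hj
    · simp
    · have h1 : (1 : ℝ) ≤ (j : ℝ) := Nat.one_le_cast.mpr hj
      nlinarith
  constructor
  · intro r hr ρ κ hρ hκ
    obtain ⟨r', rfl⟩ : ∃ r', r = r' + 1 := ⟨r - 1, by omega⟩
    have h1 := gtri_TP (ρ (Fin.last r') + 1) _ hcn (r' + 1) ρ κ hρ hκ
      (fun i => by have := hρ.monotone (Fin.le_last i); omega)
    have hmat : (Matrix.of fun i j : Fin (r' + 1) => jacobiStirling1 z (ρ i) (κ j))
        = Matrix.of fun i j : Fin (r' + 1) =>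
          gtri (fun m => (m : ℝ) * ((m : ℝ) + z)) (ρ i) (κ j) := by
      ext i j
      exact jac_eq_gtri z _ _
    rw [hmat]
    exact h1
  · intro n r hr ρ κ hρ hκ
    obtain ⟨r', rfl⟩ : ∃ r', r = r' + 1 := ⟨r - 1, by omega⟩
    exact toe_TP z hz n (ρ (Fin.last r') + 1) (r' + 1) ρ κ hρ hκ
      (fun i => by have := hρ.monotone (Fin.le_last i); omega)
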